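/- arXiv:1301.7178 — 2 statements merged into one kernel-verified Lean document; each statement's English description precedes it below -/
import Mathlib

section
/- Let y_1,...,y_k, z_1,...,z_k be i.i.d. uniform on [0,1] and m > 0. Then E[det({e^{-2πi m y_j z_l}}_{1≤j,l≤k} · ({e^{-2πi m y_j z_l}})*)] = k! · E_Z[det({ (1 - e^{-2πi m (z_j - z_l)}) / (2πi m (z_j - z_l)) }_{1≤j,l≤k})], where the diagonal entries (j=l) are interpreted as 1. -/
open Matrix MeasureTheory

/-- The random `k×k` matrix with entries `g_{jl} = exp(-2πi m y_j z_l)`. -/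
noncomputable def losMatrix (k : ℕ) (m : ℝ) (y z : Fin k → ℝ) :
    Matrix (Fin k) (Fin k) ℂ :=
  fun j l => Complex.exp (-(2 * Real.pi * m * y j * z l) * Complex.I)

/-- The kernel matrix with entries `(1 - e^{-2πi m (z_j - z_l)})/(2πi m (z_j - z_l))`,
with value `1` when `z_j = z_l`. -/
noncomputable def kernelMatrix (k : ℕ) (m : ℝ) (z : Fin k → ℝ) :
    Matrix (Fin k) (Fin k) ℂ :=
  fun j l => if z j = z l then 1 else
    (1 - Complex.exp (-(2 * Real.pi * m * (z j - z l)) * Complex.I)) /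
      (2 * Real.pi * Complex.I * m * (z j - z l))

/-- The scalar kernel function `(1 - e^{-2πi m e})/(2πi m e)`, with value `1` at `e = 0`. -/
noncomputable def losF (m e : ℝ) : ℂ :=
  if e = 0 then 1 else
    (1 - Complex.exp (-(2 * Real.pi * m * e) * Complex.I)) /
      (2 * Real.pi * Complex.I * m * e)

/-- The sign of a permutation, as a complex number. -/
noncomputable def sgnC {k : ℕ} (σ : Equiv.Perm (Fin k)) : ℂ :=
  ((Equiv.Perm.sign σ : ℤ) : ℂ)

lemma kernelMatrix_apply (k : ℕ) (m : ℝ) (z : Fin k → ℝ) (j l : Fin k) :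
    kernelMatrix k m z j l = losF m (z j - z l) := by
  simp [kernelMatrix, losF, sub_eq_zero]

lemma sgnC_sq {k : ℕ} (σ : Equiv.Perm (Fin k)) : sgnC σ * sgnC σ = 1 := by
  simp only [sgnC, ← Int.cast_mul, ← Units.val_mul, Int.units_mul_self, Units.val_one,
    Int.cast_one]

lemma losF_int (m : ℝ) (hm : m ≠ 0) (e : ℝ) :
    ∫ t in Set.Icc (0:ℝ) 1,
        Complex.exp (((-(2 * Real.pi * m * t * e) : ℝ) : ℂ) * Complex.I)
      = losF m e := by
  rw [MeasureTheory.integral_Icc_eq_integral_Ioc,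
    ← intervalIntegral.integral_of_le (by norm_num : (0:ℝ) ≤ 1)]
  rcases eq_or_ne e 0 with he | he
  · simp [he, losF]
  · have h1 : (2 * Real.pi * m * e) ≠ 0 :=
      mul_ne_zero (mul_ne_zero (mul_ne_zero two_ne_zero Real.pi_ne_zero) hm) he
    set c : ℂ := (-(2 * Real.pi * m * e) : ℝ) * Complex.I with hc
    have hc0 : c ≠ 0 :=
      mul_ne_zero (by exact_mod_cast neg_ne_zero.mpr h1) Complex.I_ne_zero
    have : ∀ t : ℝ, (Complex.exp (((-(2 * Real.pi * m * t * e) : ℝ) : ℂ) * Complex.I))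
        = Complex.exp (c * t) := by
      intro t; rw [hc]; push_cast; ring_nf
    simp_rw [this]
    rw [integral_exp_mul_complex hc0]
    simp only [losF, he, if_false]
    rw [hc, show ((1:ℝ):ℂ) = 1 from by norm_num, show ((0:ℝ):ℂ) = 0 from by norm_num,
      mul_one, mul_zero, Complex.exp_zero]
    have harg : ((-(2 * Real.pi * m * e) : ℝ) : ℂ) * Complex.I
        = -(2 * (Real.pi:ℂ) * m * e) * Complex.I := by push_cast; ring
    rw [harg]
    have hd : (2 * (Real.pi:ℂ) * Complex.I * m * e)
        = -(-(2 * (Real.pi:ℂ) * m * e) * Complex.I) := by ring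
    rw [hd, div_neg, ← neg_div, neg_sub]

lemma integral_Icc_pi_prod {k : ℕ} (f : Fin k → ℝ → ℂ) :
    ∫ y in Set.Icc (0 : Fin k → ℝ) 1, ∏ i, f i (y i)
      = ∏ i, ∫ t in Set.Icc (0:ℝ) 1, f i t := by
  rw [← MeasureTheory.integral_indicator measurableSet_Icc]
  have h : (Set.Icc (0:Fin k → ℝ) 1).indicator (fun y => ∏ i, f i (y i))
      = fun y => ∏ i, (Set.Icc (0:ℝ) 1).indicator (f i) (y i) := by
    funext y
    by_cases hy : y ∈ Set.Icc (0 : Fin k → ℝ) 1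
    · rw [Set.indicator_of_mem hy]
      exact Finset.prod_congr rfl fun i _ =>
        (Set.indicator_of_mem (Set.mem_Icc.mpr ⟨hy.1 i, hy.2 i⟩) _).symm
    · rw [Set.indicator_of_notMem hy]
      have : ∃ i, y i ∉ Set.Icc (0:ℝ) 1 := by
        by_contra hcon
        push_neg at hcon
        exact hy (Set.mem_Icc.mpr ⟨fun i => (Set.mem_Icc.mp (hcon i)).1,
          fun i => (Set.mem_Icc.mp (hcon i)).2⟩)
      obtain ⟨i, hi⟩ := this
      exact (Finset.prod_eq_zero (Finset.mem_univ i)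
        (Set.indicator_of_notMem hi _)).symm
  rw [h, volume_pi]
  beta_reduce
  rw [MeasureTheory.integral_fintype_prod_eq_prod (ι := Fin k)
    (fun i => (Set.Icc (0:ℝ) 1).indicator (f i))]
  exact Finset.prod_congr rfl fun i _ =>
    (MeasureTheory.integral_indicator measurableSet_Icc)

lemma det_expand (k : ℕ) (m : ℝ) (y z : Fin k → ℝ) :
    (losMatrix k m y z * (losMatrix k m y z)ᴴ).det
      = ∑ σ : Equiv.Perm (Fin k), ∑ τ : Equiv.Perm (Fin k),
          (sgnC σ * sgnC τ) *
            ∏ i, Complex.exp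
              (((-(2 * Real.pi * m * y i * (z (σ⁻¹ i) - z (τ⁻¹ i))) : ℝ) : ℂ)
                * Complex.I) := by
  have hre : ∀ σ : Equiv.Perm (Fin k),
      (∏ i, losMatrix k m y z (σ i) i)
        = ∏ i, Complex.exp (-(2 * Real.pi * m * y i * z (σ⁻¹ i)) * Complex.I) := by
    intro σ
    rw [← Equiv.prod_comp σ
      (fun i => Complex.exp (-(2 * Real.pi * m * y i * z (σ⁻¹ i)) * Complex.I))]
    refine Finset.prod_congr rfl fun i _ => ?_
    simp [losMatrix]
  rw [Matrix.det_mul, Matrix.det_conjTranspose, Matrix.det_apply',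
    star_sum, Finset.sum_mul_sum]
  refine Finset.sum_congr rfl fun σ _ => Finset.sum_congr rfl fun τ _ => ?_
  rw [star_mul', star_prod, hre σ]
  have hstar : ∀ i, star (losMatrix k m y z (τ i) i)
      = Complex.exp ((2 * Real.pi * m * y (τ i) * z i : ℝ) * Complex.I) := by
    intro i
    simp only [losMatrix, Complex.star_def, ← Complex.exp_conj, _root_.map_mul,
      Complex.conj_I, map_neg, Complex.conj_ofReal, map_ofNat]
    congr 1
    push_cast
    ring
  simp_rw [hstar]
  have hre2 : (∏ i, Complex.exp ((2 * Real.pi * m * y (τ i) * z i : ℝ) * Complex.I))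
      = ∏ i, Complex.exp ((2 * Real.pi * m * y i * z (τ⁻¹ i) : ℝ) * Complex.I) := by
    rw [← Equiv.prod_comp τ
      (fun i => Complex.exp ((2 * Real.pi * m * y i * z (τ⁻¹ i) : ℝ) * Complex.I))]
    refine Finset.prod_congr rfl fun i _ => ?_
    simp
  rw [hre2, star_intCast]
  have hprod :
      (∏ i, Complex.exp (-(2 * Real.pi * m * y i * z (σ⁻¹ i)) * Complex.I)) *
        ∏ i, Complex.exp ((2 * Real.pi * m * y i * z (τ⁻¹ i) : ℝ) * Complex.I)
      = ∏ i, Complex.exp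
          (((-(2 * Real.pi * m * y i * (z (σ⁻¹ i) - z (τ⁻¹ i))) : ℝ) : ℂ)
            * Complex.I) := by
    rw [← Finset.prod_mul_distrib]
    refine Finset.prod_congr rfl fun i _ => ?_
    rw [← Complex.exp_add]
    congr 1
    push_cast
    ring
  simp only [sgnC]
  rw [← hprod]
  ring

lemma perm_sum (k : ℕ) (m : ℝ) (z : Fin k → ℝ) :
    (∑ σ : Equiv.Perm (Fin k), ∑ τ : Equiv.Perm (Fin k),
        (sgnC σ * sgnC τ) * ∏ i, losF m (z (σ⁻¹ i) - z (τ⁻¹ i)))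
      = (k.factorial : ℂ) * (kernelMatrix k m z).det := by
  have hdet : (kernelMatrix k m z).det
      = ∑ ρ : Equiv.Perm (Fin k), sgnC ρ * ∏ i, losF m (z i - z (ρ i)) := by
    rw [← Matrix.det_transpose, Matrix.det_apply']
    refine Finset.sum_congr rfl fun ρ _ => ?_
    rw [sgnC]
    congr 1
    exact Finset.prod_congr rfl fun i _ => kernelMatrix_apply k m z i (ρ i)
  have hσ : ∀ σ : Equiv.Perm (Fin k),
      (∑ τ : Equiv.Perm (Fin k),
          (sgnC σ * sgnC τ) * ∏ i, losF m (z (σ⁻¹ i) - z (τ⁻¹ i)))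
        = (kernelMatrix k m z).det := by
    intro σ
    rw [← Equiv.sum_comp ((Equiv.inv (Equiv.Perm (Fin k))).trans (Equiv.mulLeft σ))
      (fun τ => (sgnC σ * sgnC τ) * ∏ i, losF m (z (σ⁻¹ i) - z (τ⁻¹ i))), hdet]
    refine Finset.sum_congr rfl fun ρ _ => ?_
    simp only [Equiv.trans_apply, Equiv.inv_apply, Equiv.coe_mulLeft]
    have h1 : sgnC σ * sgnC (σ * ρ⁻¹) = sgnC ρ := by
      have : sgnC (σ * ρ⁻¹) = sgnC σ * sgnC ρ := by
        simp only [sgnC, _root_.map_mul, _root_.map_inv, Int.units_inv_eq_self]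
        push_cast
        ring
      rw [this, ← mul_assoc, sgnC_sq, one_mul]
    rw [h1]
    congr 1
    rw [← Equiv.prod_comp σ (fun i => losF m (z (σ⁻¹ i) - z ((σ * ρ⁻¹)⁻¹ i)))]
    refine Finset.prod_congr rfl fun i _ => ?_
    simp [_root_.mul_inv_rev, Equiv.Perm.mul_apply]
  rw [Finset.sum_congr rfl fun σ _ => hσ σ, Finset.sum_const, Finset.card_univ,
    Fintype.card_perm, Fintype.card_fin, nsmul_eq_mul]

set_option maxHeartbeats 1600000 in
lemma point_integral (k : ℕ) (m : ℝ) (hm : m ≠ 0) (z : Fin k → ℝ) :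
    ∫ y in Set.Icc (0 : Fin k → ℝ) 1, (losMatrix k m y z * (losMatrix k m y z)ᴴ).det
      = (k.factorial : ℂ) * (kernelMatrix k m z).det := by
  have hint : ∀ p : Equiv.Perm (Fin k) × Equiv.Perm (Fin k),
      IntegrableOn (fun y : Fin k → ℝ => (sgnC p.1 * sgnC p.2) *
        ∏ i, Complex.exp
          (((-(2 * Real.pi * m * y i * (z (p.1⁻¹ i) - z (p.2⁻¹ i))) : ℝ) : ℂ)
            * Complex.I))
        (Set.Icc 0 1) volume := by
    intro p
    apply Continuous.integrableOn_Icc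
    apply continuous_const.mul
    apply continuous_finset_prod
    intro i _
    show Continuous fun y : Fin k → ℝ => Complex.exp
      (((-(2 * Real.pi * m * y i * (z (p.1⁻¹ i) - z (p.2⁻¹ i))) : ℝ) : ℂ)
        * Complex.I)
    fun_prop
  have expand : ∀ y : Fin k → ℝ, (losMatrix k m y z * (losMatrix k m y z)ᴴ).det
      = ∑ p : Equiv.Perm (Fin k) × Equiv.Perm (Fin k),
          (sgnC p.1 * sgnC p.2) *
            ∏ i, Complex.exp
              (((-(2 * Real.pi * m * y i * (z (p.1⁻¹ i) - z (p.2⁻¹ i))) : ℝ) : ℂ)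
                * Complex.I) := by
    intro y
    rw [det_expand k m y z, ← Finset.sum_product', Finset.univ_product_univ]
  rw [integral_congr_ae (Filter.Eventually.of_forall expand),
    MeasureTheory.integral_finset_sum _ (fun p _ => hint p)]
  have hterm : ∀ p : Equiv.Perm (Fin k) × Equiv.Perm (Fin k),
      (∫ y in Set.Icc (0 : Fin k → ℝ) 1, (sgnC p.1 * sgnC p.2) *
          ∏ i, Complex.exp
            (((-(2 * Real.pi * m * y i * (z (p.1⁻¹ i) - z (p.2⁻¹ i))) : ℝ) : ℂ)
              * Complex.I))
        = (sgnC p.1 * sgnC p.2) * ∏ i, losF m (z (p.1⁻¹ i) - z (p.2⁻¹ i)) := by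
    intro p
    rw [MeasureTheory.integral_const_mul]
    congr 1
    rw [integral_Icc_pi_prod (fun i t => Complex.exp
      (((-(2 * Real.pi * m * t * (z (p.1⁻¹ i) - z (p.2⁻¹ i))) : ℝ) : ℂ)
        * Complex.I))]
    exact Finset.prod_congr rfl fun i _ => losF_int m hm _
  rw [Finset.sum_congr rfl fun p _ => hterm p, ← Finset.univ_product_univ,
    Finset.sum_product]
  exact perm_sum k m z

theorem expected_det_eq_factorial_mul_expected_kernel_det (k : ℕ) (m : ℝ) (hm : 0 < m) :
    (∫ y in Set.Icc (0 : Fin k → ℝ) 1, ∫ z in Set.Icc (0 : Fin k → ℝ) 1,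
        (losMatrix k m y z * (losMatrix k m y z)ᴴ).det)
      =
    (k.factorial : ℂ) *
      ∫ z in Set.Icc (0 : Fin k → ℝ) 1, (kernelMatrix k m z).det := by
  have hm' : m ≠ 0 := ne_of_gt hm
  have hcont : Continuous (fun p : (Fin k → ℝ) × (Fin k → ℝ) =>
      (losMatrix k m p.1 p.2 * (losMatrix k m p.1 p.2)ᴴ).det) := by
    apply Continuous.matrix_det
    apply Continuous.matrix_mul
    · apply continuous_matrix
      intro i j
      show Continuous fun p : (Fin k → ℝ) × (Fin k → ℝ) => Complex.exp
        (-(2 * (Real.pi : ℂ) * (m : ℂ) * (p.1 i : ℂ) * (p.2 j : ℂ)) * Complex.I)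
      fun_prop
    · apply Continuous.matrix_conjTranspose
      apply continuous_matrix
      intro i j
      show Continuous fun p : (Fin k → ℝ) × (Fin k → ℝ) => Complex.exp
        (-(2 * (Real.pi : ℂ) * (m : ℂ) * (p.1 i : ℂ) * (p.2 j : ℂ)) * Complex.I)
      fun_prop
  have hInt : Integrable (Function.uncurry (fun y z : Fin k → ℝ =>
      (losMatrix k m y z * (losMatrix k m y z)ᴴ).det))
      ((volume.restrict (Set.Icc (0 : Fin k → ℝ) 1)).prod
        (volume.restrict (Set.Icc (0 : Fin k → ℝ) 1))) := by
    rw [Measure.prod_restrict]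
    exact hcont.continuousOn.integrableOn_compact (isCompact_Icc.prod isCompact_Icc)
  rw [MeasureTheory.integral_integral_swap hInt, ← MeasureTheory.integral_const_mul]
  exact integral_congr_ae (Filter.Eventually.of_forall fun z' => point_integral k m hm' z')
end

section
/- Let y_1,...,y_k, z_1,...,z_k be i.i.d. uniform on [0,1], m > 0, and G_{k×k} the matrix with entries e^{-2πi m y_j z_l}. Then E[det(G_{k×k} G_{k×k}*)] = (k!)²/m^k · d_k, where d_k = (1/k!) ∫_{[0,1]^k} det({sin(πm(x_j - x_l))/(π(x_j - x_l))}_{j,l}) dx_1···dx_k (diagonal entries equal to m). -/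
open Matrix MeasureTheory

noncomputable def Kc (m a : ℝ) : ℂ :=
  if a = 0 then (m : ℂ) else ((Real.sin (Real.pi * m * a) / (Real.pi * a) : ℝ) : ℂ)


lemma hpt (k : ℕ) (m : ℝ) (y z : Fin k → ℝ) :
    (losMatrix k m y z * (losMatrix k m y z)ᴴ).det
    = ∑ σ : Equiv.Perm (Fin k), ∑ τ : Equiv.Perm (Fin k),
        (((Equiv.Perm.sign σ : ℤ) : ℂ) * ((Equiv.Perm.sign τ : ℤ) : ℂ)) *
          ∏ i, Complex.exp (((2 * Real.pi * m * (y (τ i) - y (σ i)) : ℝ) : ℂ) * (z i) * Complex.I) := by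
  rw [Matrix.det_mul, ← Matrix.det_transpose ((losMatrix k m y z)ᴴ),
    Matrix.det_apply', Matrix.det_apply', Finset.sum_mul_sum]
  refine Finset.sum_congr rfl fun σ _ => Finset.sum_congr rfl fun τ _ => ?_
  rw [mul_mul_mul_comm, ← Finset.prod_mul_distrib]
  congr 1
  refine Finset.prod_congr rfl fun i _ => ?_
  simp only [Matrix.transpose_apply, Matrix.conjTranspose_apply, losMatrix, RCLike.star_def,
    ← Complex.exp_conj, ← Complex.exp_add]
  congr 1
  simp only [_root_.map_mul, map_neg, Complex.conj_I, Complex.conj_ofReal, map_ofNat]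
  push_cast
  ring

lemma hint (k : ℕ) (m : ℝ) (c : ℂ) (a : Fin k → ℝ) :
    IntegrableOn (fun z : Fin k → ℝ =>
      c * ∏ i, Complex.exp (((2 * Real.pi * m * (a i) : ℝ) : ℂ) * (z i) * Complex.I))
      (Set.Icc 0 1) := by
  apply ContinuousOn.integrableOn_compact isCompact_Icc
  apply Continuous.continuousOn
  apply Continuous.mul continuous_const
  apply continuous_finset_prod
  intro i _
  apply Complex.continuous_exp.comp
  fun_prop

lemma hphase (k : ℕ) (m : ℝ) (y : Fin k → ℝ) (σ τ : Equiv.Perm (Fin k)) :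
    ∏ i, Complex.exp (((Real.pi * m * (y (τ i) - y (σ i)) : ℝ) : ℂ) * Complex.I) = 1 := by
  rw [← Complex.exp_sum, ← Finset.sum_mul, ← Complex.ofReal_sum]
  have h0 : ∑ i, Real.pi * m * (y (τ i) - y (σ i)) = 0 := by
    simp only [mul_sub, Finset.sum_sub_distrib]
    rw [Equiv.sum_comp τ (fun j => Real.pi * m * y j),
      Equiv.sum_comp σ (fun j => Real.pi * m * y j), sub_self]
  rw [h0, Complex.ofReal_zero, zero_mul, Complex.exp_zero]

lemma hperm (k : ℕ) (m : ℝ) (y : Fin k → ℝ) (σ : Equiv.Perm (Fin k)) :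
    ∑ τ : Equiv.Perm (Fin k),
      (((Equiv.Perm.sign σ : ℤ) : ℂ) * ((Equiv.Perm.sign τ : ℤ) : ℂ)) *
        ∏ i, Kc m (y (τ i) - y (σ i))
    = Matrix.det (fun j l : Fin k => Kc m (y j - y l)) := by
  rw [Matrix.det_apply' (M := fun j l : Fin k => Kc m (y j - y l))]
  refine (Fintype.sum_equiv (Equiv.mulRight σ) _ _ fun π => ?_).symm
  have hs : (((Equiv.Perm.sign σ : ℤ) : ℂ) * ((Equiv.Perm.sign (π * σ) : ℤ) : ℂ))
      = ((Equiv.Perm.sign π : ℤ) : ℂ) := by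
    have : Equiv.Perm.sign σ * Equiv.Perm.sign (π * σ) = Equiv.Perm.sign π := by
      rw [Equiv.Perm.sign_mul, mul_comm (Equiv.Perm.sign π), ← mul_assoc,
        Int.units_mul_self, one_mul]
    exact_mod_cast congrArg (fun u : ℤˣ => ((u : ℤ) : ℂ)) this
  have hp : ∏ i, Kc m (y ((π * σ) i) - y (σ i)) = ∏ i, Kc m (y (π i) - y i) := by
    simp only [Equiv.Perm.mul_apply]
    exact Equiv.prod_comp σ (fun j => Kc m (y (π j) - y j))
  simp only [Equiv.coe_mulRight]
  rw [hp, hs]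

lemma lemA (m : ℝ) (hm : 0 < m) (a : ℝ) :
    ∫ t in Set.Icc (0:ℝ) 1, Complex.exp (((2 * Real.pi * m * a : ℝ) : ℂ) * t * Complex.I)
      = Complex.exp (((Real.pi * m * a : ℝ) : ℂ) * Complex.I) * (Kc m a / m) := by
  by_cases ha : a = 0
  · subst ha
    simp only [mul_zero, Complex.ofReal_zero, zero_mul, Complex.exp_zero,
      MeasureTheory.setIntegral_const, Real.volume_Icc, Kc, if_pos rfl]
    norm_num [hm.ne']
  · have hπ : (Real.pi : ℂ) ≠ 0 := by exact_mod_cast Real.pi_ne_zero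
    have hmc : (m : ℂ) ≠ 0 := by exact_mod_cast hm.ne'
    have hac : (a : ℂ) ≠ 0 := by exact_mod_cast ha
    have hc : (((2 * Real.pi * m * a : ℝ) : ℂ) * Complex.I) ≠ 0 := by
      push_cast
      simp [Complex.I_ne_zero, hπ, hmc, hac]
    have h1 : ∫ t in Set.Icc (0:ℝ) 1,
        Complex.exp (((2 * Real.pi * m * a : ℝ) : ℂ) * t * Complex.I)
        = ∫ t in (0:ℝ)..1, Complex.exp ((((2 * Real.pi * m * a : ℝ) : ℂ) * Complex.I) * t) := by
      rw [MeasureTheory.integral_Icc_eq_integral_Ioc,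
        ← intervalIntegral.integral_of_le (by norm_num : (0:ℝ) ≤ 1)]
      congr 1
      ext t
      ring_nf
    rw [h1, integral_exp_mul_complex hc]
    rw [Kc, if_neg ha]
    set x : ℂ := ((Real.pi * m * a : ℝ) : ℂ) with hx
    have h2 : (((2 * Real.pi * m * a : ℝ) : ℂ) * Complex.I) * (1:ℝ) = x * Complex.I + x * Complex.I := by
      rw [hx]; push_cast; ring
    have h3 : (((2 * Real.pi * m * a : ℝ) : ℂ) * Complex.I) * (0:ℝ) = 0 := by push_cast; ring
    rw [h2, h3, Complex.exp_add, Complex.exp_zero]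
    have hsin : Complex.sin ((Real.pi : ℂ) * m * a)
        = (Complex.exp (-x * Complex.I) - Complex.exp (x * Complex.I)) * Complex.I / 2 := by
      rw [show ((Real.pi : ℂ) * m * a) = x by rw [hx]; push_cast; ring, Complex.sin]
    push_cast
    rw [hsin]
    have hEF : Complex.exp (x * Complex.I) * Complex.exp (-x * Complex.I) = 1 := by
      rw [← Complex.exp_add]; ring_nf; exact Complex.exp_zero
    set E := Complex.exp (x * Complex.I)
    set F := Complex.exp (-x * Complex.I)
    have hI := Complex.I_sq
    have hI0 : Complex.I ≠ 0 := Complex.I_ne_zero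
    field_simp
    ring_nf
    field_simp [Complex.inv_I]
    linear_combination hEF + (E ^ 2 - E * F) * hI


lemma lemB {k : ℕ} (g : Fin k → ℝ → ℂ) :
    ∫ z in Set.Icc (0 : Fin k → ℝ) 1, ∏ i, g i (z i)
      = ∏ i, ∫ t in Set.Icc (0:ℝ) 1, g i t := by
  have h1 : ∫ z in Set.Icc (0 : Fin k → ℝ) 1, ∏ i, g i (z i)
      = ∫ z : Fin k → ℝ, Set.indicator (Set.Icc 0 1) (fun z => ∏ i, g i (z i)) z :=
    (MeasureTheory.integral_indicator measurableSet_Icc).symm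
  rw [h1]
  have h2 : ∀ z : Fin k → ℝ, Set.indicator (Set.Icc 0 1) (fun z => ∏ i, g i (z i)) z
      = ∏ i, Set.indicator (Set.Icc (0:ℝ) 1) (g i) (z i) := by
    intro z
    by_cases hz : z ∈ Set.Icc (0 : Fin k → ℝ) 1
    · rw [Set.indicator_of_mem hz]
      refine Finset.prod_congr rfl fun i _ => ?_
      rw [Set.indicator_of_mem]
      exact Set.mem_Icc.2 ⟨hz.1 i, hz.2 i⟩
    · rw [Set.indicator_of_notMem hz]
      have : ∃ i, z i ∉ Set.Icc (0:ℝ) 1 := by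
        by_contra h
        push_neg at h
        exact hz (Set.mem_Icc.2 ⟨fun i => (h i).1, fun i => (h i).2⟩)
      obtain ⟨i, hi⟩ := this
      exact (Finset.prod_eq_zero (Finset.mem_univ i)
        (by rw [Set.indicator_of_notMem hi])).symm
  simp_rw [h2]
  rw [MeasureTheory.integral_fintype_prod_volume_eq_prod (f := fun i t => Set.indicator (Set.Icc (0:ℝ) 1) (g i) t)]
  exact Finset.prod_congr rfl fun i _ =>
    MeasureTheory.integral_indicator measurableSet_Icc

lemma inner_int (k : ℕ) (m : ℝ) (hm : 0 < m) (y : Fin k → ℝ) :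
    ∫ z in Set.Icc (0 : Fin k → ℝ) 1, (losMatrix k m y z * (losMatrix k m y z)ᴴ).det
    = (k.factorial : ℂ) * ((1 / (m : ℂ) ^ k) *
        Matrix.det (fun j l : Fin k => Kc m (y j - y l))) := by
  simp_rw [hpt k m y]
  rw [MeasureTheory.integral_finset_sum _
    (fun σ _ => integrable_finset_sum _ (fun τ _ => hint k m _ _))]
  have hterm : ∀ σ τ : Equiv.Perm (Fin k),
      ∫ z in Set.Icc (0 : Fin k → ℝ) 1,
        (((Equiv.Perm.sign σ : ℤ) : ℂ) * ((Equiv.Perm.sign τ : ℤ) : ℂ)) *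
          ∏ i, Complex.exp (((2 * Real.pi * m * (y (τ i) - y (σ i)) : ℝ) : ℂ) * (z i) * Complex.I)
      = (((Equiv.Perm.sign σ : ℤ) : ℂ) * ((Equiv.Perm.sign τ : ℤ) : ℂ)) *
          ((1 / (m : ℂ) ^ k) * ∏ i, Kc m (y (τ i) - y (σ i))) := by
    intro σ τ
    rw [MeasureTheory.integral_const_mul,
      lemB (fun i t => Complex.exp (((2 * Real.pi * m * (y (τ i) - y (σ i)) : ℝ) : ℂ) * t * Complex.I))]
    congr 1
    calc ∏ i, ∫ t in Set.Icc (0:ℝ) 1,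
          Complex.exp (((2 * Real.pi * m * (y (τ i) - y (σ i)) : ℝ) : ℂ) * t * Complex.I)
        = ∏ i, Complex.exp (((Real.pi * m * (y (τ i) - y (σ i)) : ℝ) : ℂ) * Complex.I) *
            (Kc m (y (τ i) - y (σ i)) / m) :=
          Finset.prod_congr rfl fun i _ => lemA m hm _
      _ = (∏ i, Complex.exp (((Real.pi * m * (y (τ i) - y (σ i)) : ℝ) : ℂ) * Complex.I)) *
            ∏ i, (Kc m (y (τ i) - y (σ i)) / m) := Finset.prod_mul_distrib
      _ = (1 / (m : ℂ) ^ k) * ∏ i, Kc m (y (τ i) - y (σ i)) := by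
          rw [hphase k m y σ τ, one_mul, Finset.prod_div_distrib, Finset.prod_const,
            Finset.card_univ, Fintype.card_fin, div_eq_mul_one_div, mul_comm]
  calc ∑ σ : Equiv.Perm (Fin k), ∫ z in Set.Icc (0 : Fin k → ℝ) 1,
        ∑ τ : Equiv.Perm (Fin k),
          (((Equiv.Perm.sign σ : ℤ) : ℂ) * ((Equiv.Perm.sign τ : ℤ) : ℂ)) *
            ∏ i, Complex.exp (((2 * Real.pi * m * (y (τ i) - y (σ i)) : ℝ) : ℂ) * (z i) * Complex.I)
      = ∑ σ : Equiv.Perm (Fin k), ∑ τ : Equiv.Perm (Fin k),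
          (((Equiv.Perm.sign σ : ℤ) : ℂ) * ((Equiv.Perm.sign τ : ℤ) : ℂ)) *
            ((1 / (m : ℂ) ^ k) * ∏ i, Kc m (y (τ i) - y (σ i))) := by
        refine Finset.sum_congr rfl fun σ _ => ?_
        rw [MeasureTheory.integral_finset_sum _ (fun τ _ => hint k m _ _)]
        exact Finset.sum_congr rfl fun τ _ => hterm σ τ
    _ = ∑ σ : Equiv.Perm (Fin k), (1 / (m : ℂ) ^ k) *
          ∑ τ : Equiv.Perm (Fin k),
            (((Equiv.Perm.sign σ : ℤ) : ℂ) * ((Equiv.Perm.sign τ : ℤ) : ℂ)) *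
              ∏ i, Kc m (y (τ i) - y (σ i)) := by
        refine Finset.sum_congr rfl fun σ _ => ?_
        rw [Finset.mul_sum]
        exact Finset.sum_congr rfl fun τ _ => by ring
    _ = ∑ σ : Equiv.Perm (Fin k), (1 / (m : ℂ) ^ k) *
          Matrix.det (fun j l : Fin k => Kc m (y j - y l)) := by
        exact Finset.sum_congr rfl fun σ _ => by rw [hperm k m y σ]
    _ = (k.factorial : ℂ) * ((1 / (m : ℂ) ^ k) *
          Matrix.det (fun j l : Fin k => Kc m (y j - y l))) := by
        rw [Finset.sum_const, Finset.card_univ, Fintype.card_perm, Fintype.card_fin,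
          nsmul_eq_mul]

/-- `E[det(G_{k×k}G_{k×k}*)] = (k!)²/m^k · d_k`, where `d_k` is the `k`-th Fredholm
coefficient of the sinc kernel `sin(πm(x-y))/(π(x-y))` (diagonal value `m`). -/
theorem expected_det_eq_fredholm_coeff (k : ℕ) (m : ℝ) (hm : 0 < m) :
    (∫ y in Set.Icc (0 : Fin k → ℝ) 1, ∫ z in Set.Icc (0 : Fin k → ℝ) 1,
        (losMatrix k m y z * (losMatrix k m y z)ᴴ).det)
      =
    ((k.factorial : ℂ) ^ 2 / (m : ℂ) ^ k) *
      ((1 / (k.factorial : ℂ)) *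
        ∫ x in Set.Icc (0 : Fin k → ℝ) 1,
          Matrix.det (fun j l : Fin k =>
            if x j = x l then (m : ℂ) else
              ((Real.sin (Real.pi * m * (x j - x l)) / (Real.pi * (x j - x l)) : ℝ) : ℂ))) := by
  have h1 : (∫ y in Set.Icc (0 : Fin k → ℝ) 1, ∫ z in Set.Icc (0 : Fin k → ℝ) 1,
        (losMatrix k m y z * (losMatrix k m y z)ᴴ).det)
      = ∫ y in Set.Icc (0 : Fin k → ℝ) 1, (k.factorial : ℂ) * ((1 / (m : ℂ) ^ k) *
          Matrix.det (fun j l : Fin k => Kc m (y j - y l))) :=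
    MeasureTheory.integral_congr_ae (Filter.Eventually.of_forall fun y => inner_int k m hm y)
  rw [h1, MeasureTheory.integral_const_mul, MeasureTheory.integral_const_mul]
  have h2 : ∫ y in Set.Icc (0 : Fin k → ℝ) 1,
        Matrix.det (fun j l : Fin k => Kc m (y j - y l))
      = ∫ x in Set.Icc (0 : Fin k → ℝ) 1,
          Matrix.det (fun j l : Fin k =>
            if x j = x l then (m : ℂ) else
              ((Real.sin (Real.pi * m * (x j - x l)) / (Real.pi * (x j - x l)) : ℝ) : ℂ)) := by
    refine MeasureTheory.integral_congr_ae (Filter.Eventually.of_forall fun x => ?_)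
    simp only []
    congr 1
    funext j l
    simp [Kc, sub_eq_zero]
  rw [h2]
  have hfac : (k.factorial : ℂ) ≠ 0 := Nat.cast_ne_zero.2 (Nat.factorial_ne_zero k)
  have hmc : (m : ℂ) ≠ 0 := by exact_mod_cast hm.ne'
  field_simp
end
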